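/- Let (S, L) be a total abstract cubic, G_S its reflection group, and B₀ the normal closure in G_S of {t_a t_b t_c t_{a'} t_b t_{c'} : (a,b,c) ∈ L, (a',b,c') ∈ L}. Assume that for every admissible equivalence relation R on S, the quotient E = S/R with its induced composition ∘ satisfies t_X ∘ t_Y ∘ t_{X∘Y} = t_{Y∘Y} as maps E → E, for all X, Y ∈ E (where t_X(W) := X ∘ W). Then for all x, y ∈ S: t_x t_y ∈ B₀ if and only if x ≈ y, i.e. the relation U defined by x U y ⇔ t_x t_y ∈ B₀ is exactly the universal admissible equivalence relation on S. -/

import Mathlib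

/-- The defining relators of the reflection group of an abstract cubic `(S, L)`:
`(t_x)^2` for all `x`, and `(t_x t_y t_z)^2` for all collinear triples `(x,y,z) ∈ L`. -/
def cubicRels (S : Type*) (L : S → S → S → Prop) : Set (FreeGroup S) :=
  {r | (∃ x : S, r = FreeGroup.of x ^ 2) ∨
    ∃ x y z : S, L x y z ∧ r = (FreeGroup.of x * FreeGroup.of y * FreeGroup.of z) ^ 2}

/-- The reflection group `G_S` of an abstract cubic, as a presented group. -/
abbrev ReflGroup (S : Type*) (L : S → S → S → Prop) : Type _ :=
  PresentedGroup (cubicRels S L)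

/-- The generator (reflection) `t_x` of the reflection group. -/
def tgen (S : Type*) (L : S → S → S → Prop) (x : S) : ReflGroup S L :=
  PresentedGroup.of x

/-- The approximating equivalence relations `≈_i` of §3: `≈_0` is equality, and `≈_{i+1}` is the
transitive closure of the relation `∼_{i+1}` (see `simR`). -/
def approxR {S : Type*} (L : S → S → S → Prop) : ℕ → S → S → Prop
  | 0 => Eq
  | i + 1 => Relation.TransGen (fun x x' => x = x' ∨ ∃ u v u' v' : S,
      approxR L i u u' ∧ approxR L i v v' ∧ L u v x ∧ L u' v' x')

/-- The relations `∼_i` of §3: `∼_0` is equality, and `x ∼_{i+1} x'` iff `x = x'` or there are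
`u ≈_i u'`, `v ≈_i v'` with `(u,v,x) ∈ L` and `(u',v',x') ∈ L`. -/
def simR {S : Type*} (L : S → S → S → Prop) : ℕ → S → S → Prop
  | 0 => Eq
  | i + 1 => fun x x' => x = x' ∨ ∃ u v u' v' : S,
      approxR L i u u' ∧ approxR L i v v' ∧ L u v x ∧ L u' v' x'

/-- An equivalence relation `r` on `S` is admissible if on `S/r` the induced collinearity
relation `L/r` (three classes are collinear iff they contain representatives forming a
collinear triple) defines a composition: for all classes `X, Y` there is a unique class `Z`
with `(X,Y,Z) ∈ L/r`. -/
def AdmissibleRel {S : Type*} (L : S → S → S → Prop) (r : S → S → Prop) : Prop :=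
  Equivalence r ∧
  ∀ x y : S, ∃ z : S,
    (∃ x' y' z' : S, r x x' ∧ r y y' ∧ r z z' ∧ L x' y' z') ∧
    ∀ w : S, (∃ x' y' w' : S, r x x' ∧ r y y' ∧ r w w' ∧ L x' y' w') → r z w

/-- The set of generators of the subgroup `B₀ ⊆ G_S`: elements `t_a t_b t_c t_{a'} t_b t_{c'}`
for collinear triples `(a,b,c) ∈ L` and `(a',b,c') ∈ L` sharing the middle point `b`.
`B₀` itself is the normal closure of this set in `G_S`. -/
def B0Gens (S : Type*) (L : S → S → S → Prop) : Set (ReflGroup S L) :=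
  {g | ∃ a b c a' c' : S, L a b c ∧ L a' b c' ∧
    g = tgen S L a * tgen S L b * tgen S L c * tgen S L a' * tgen S L b * tgen S L c'}

/-- The subgroup `Bⁱ ⊆ G_S`: the normal closure of `{t_u t_{u'} : u ∼_i u'}`. -/
def Bn (S : Type*) (L : S → S → S → Prop) (i : ℕ) : Subgroup (ReflGroup S L) :=
  Subgroup.normalClosure {g | ∃ u u' : S, simR L i u u' ∧ g = tgen S L u * tgen S L u'}

section AuxRel

variable {S : Type*} {L : S → S → S → Prop}

lemma approxR_refl : ∀ (i : ℕ) (x : S), approxR L i x x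
  | 0, x => rfl
  | i + 1, x => Relation.TransGen.single (Or.inl rfl)

lemma approxR_symm : ∀ (i : ℕ) {x y : S}, approxR L i x y → approxR L i y x := by
  intro i
  induction i with
  | zero => intro x y h; exact h.symm
  | succ i ih =>
    intro x y h
    induction h with
    | single h =>
      refine Relation.TransGen.single ?_
      rcases h with rfl | ⟨u, v, u', v', hu, hv, h1, h2⟩
      · exact Or.inl rfl
      · exact Or.inr ⟨u', v', u, v, ih hu, ih hv, h2, h1⟩
    | tail h₁ h₂ ih2 =>
      refine Relation.TransGen.head ?_ ih2
      rcases h₂ with rfl | ⟨u, v, u', v', hu, hv, h1, h2⟩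
      · exact Or.inl rfl
      · exact Or.inr ⟨u', v', u, v, ih hu, ih hv, h2, h1⟩

lemma approxR_succ : ∀ (i : ℕ) {x y : S}, approxR L i x y → approxR L (i + 1) x y := by
  intro i
  induction i with
  | zero => rintro x y rfl; exact Relation.TransGen.single (Or.inl rfl)
  | succ i ih =>
    intro x y h
    refine Relation.TransGen.mono ?_ _ _ h
    rintro a b (rfl | ⟨u, v, u', v', hu, hv, h1, h2⟩)
    · exact Or.inl rfl
    · exact Or.inr ⟨u, v, u', v', ih hu, ih hv, h1, h2⟩

lemma approxR_le {i j : ℕ} (hij : i ≤ j) {x y : S} (h : approxR L i x y) :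
    approxR L j x y := by
  induction hij with
  | refl => exact h
  | step _ ih => exact approxR_succ _ ih

lemma approxR_trans {i : ℕ} {x y z : S} (h1 : approxR L i x y) (h2 : approxR L i y z) :
    approxR L (i + 1) x z :=
  (approxR_succ i h1).trans (approxR_succ i h2)

end AuxRel

/-- Theorem 4.1: assume that for every admissible equivalence relation `R` on `S`
the induced composition `∘` on `E = S/R` satisfies `t_X ∘ t_Y ∘ t_{X∘Y} = t_{Y∘Y}` as maps
`E → E`. Then `t_x t_y ∈ B₀` if and only if `x ≈ y`: the relation `U` defined by
`t_x t_y ∈ B₀` is exactly the universal admissible equivalence. -/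
theorem stmt_13 {S : Type*} (L : S → S → S → Prop)
    (hsym₁ : ∀ x y z, L x y z → L y x z)
    (hsym₂ : ∀ x y z, L x y z → L x z y)
    (huniq : ∀ x y z z', L x y z → L x y z' → x ≠ y → z = z')
    (htotal : ∀ x y : S, ∃ z : S, L x y z)
    (hAb : ∀ (r : S → S → Prop) (hadm : AdmissibleRel L r)
      (comp : Quotient (⟨r, hadm.1⟩ : Setoid S) → Quotient (⟨r, hadm.1⟩ : Setoid S) →
        Quotient (⟨r, hadm.1⟩ : Setoid S)),
      (∀ x y z : S, L x y z →
        comp (Quotient.mk ⟨r, hadm.1⟩ x) (Quotient.mk ⟨r, hadm.1⟩ y) =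
          Quotient.mk ⟨r, hadm.1⟩ z) →
      ∀ X Y W, comp X (comp Y (comp (comp X Y) W)) = comp (comp Y Y) W) :
    ∀ x y : S,
      tgen S L x * tgen S L y ∈ Subgroup.normalClosure (B0Gens S L) ↔
        ∃ i, approxR L i x y := by
  classical
  intro x₀ y₀
  constructor
  · -- forward direction
    intro hmem
    set r : S → S → Prop := fun x y => ∃ i, approxR L i x y with hr
    have hrefl : ∀ x, r x x := fun x => ⟨0, approxR_refl 0 x⟩
    have hsymm : ∀ {x y}, r x y → r y x := fun ⟨i, h⟩ => ⟨i, approxR_symm i h⟩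
    have htrans : ∀ {x y z}, r x y → r y z → r x z := by
      rintro x y z ⟨i, h1⟩ ⟨j, h2⟩
      exact ⟨max i j + 1, approxR_trans (approxR_le (le_max_left i j) h1)
        (approxR_le (le_max_right i j) h2)⟩
    have coh : ∀ {x y z x' y' z'}, L x y z → L x' y' z' → r x x' → r y y' → r z z' := by
      rintro x y z x' y' z' h1 h2 ⟨i, hx⟩ ⟨j, hy⟩
      exact ⟨max i j + 1, Relation.TransGen.single (Or.inr ⟨x, y, x', y',
        approxR_le (le_max_left i j) hx, approxR_le (le_max_right i j) hy, h1, h2⟩)⟩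
    have hadm : AdmissibleRel L r := by
      refine ⟨⟨hrefl, fun h => hsymm h, fun h1 h2 => htrans h1 h2⟩, fun x y => ?_⟩
      obtain ⟨z, hz⟩ := htotal x y
      refine ⟨z, ⟨x, y, z, hrefl x, hrefl y, hrefl z, hz⟩, ?_⟩
      rintro w ⟨x', y', w', hx, hy, hw, hL⟩
      exact htrans (coh hz hL hx hy) (hsymm hw)
    set sE : Setoid S := (⟨r, hadm.1⟩ : Setoid S) with hsE
    set qk : S → Quotient sE := Quotient.mk sE with hqk
    set cmp : Quotient sE → Quotient sE → Quotient sE :=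
      Quotient.map₂ (fun a b => Classical.choose (htotal a b))
        (fun a a' ha b b' hb =>
          coh (Classical.choose_spec (htotal a b)) (Classical.choose_spec (htotal a' b')) ha hb)
      with hcmp
    have compL : ∀ a b c, L a b c → cmp (qk a) (qk b) = qk c := by
      intro a b c h
      exact Quotient.sound (coh (Classical.choose_spec (htotal a b)) h (hrefl a) (hrefl b))
    have involC : ∀ X W, cmp X (cmp X W) = W := by
      intro X W
      refine Quotient.inductionOn₂ X W (fun a w => ?_)
      obtain ⟨z, hz⟩ := htotal a w
      rw [show (Quotient.mk sE a : Quotient sE) = qk a from rfl,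
        show (Quotient.mk sE w : Quotient sE) = qk w from rfl,
        compL a w z hz, compL a z w (hsym₂ _ _ _ hz)]
    have hKey := hAb r hadm cmp compL
    set f : S → Equiv.Perm (Quotient sE) := fun a =>
      Function.Involutive.toPerm (cmp (qk a)) (fun W => involC (qk a) W) with hf
    have hfa : ∀ a W, f a W = cmp (qk a) W := fun a W => rfl
    have hTrip : ∀ a b c, L a b c → ∀ W, f a (f b (f c W)) = cmp (cmp (qk b) (qk b)) W := by
      intro a b c h W
      rw [hfa, hfa, hfa, show (qk c) = cmp (qk a) (qk b) from (compL a b c h).symm]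
      exact hKey (qk a) (qk b) W
    have hrels : ∀ rl ∈ cubicRels S L, FreeGroup.lift f rl = 1 := by
      rintro rl (⟨a, rfl⟩ | ⟨a, b, c, h, rfl⟩)
      · refine Equiv.ext fun W => ?_
        simp only [map_pow, map_mul, FreeGroup.lift_apply_of, sq, Equiv.Perm.mul_apply,
          Equiv.Perm.one_apply]
        rw [hfa, hfa]
        exact involC (qk a) W
      · refine Equiv.ext fun W => ?_
        simp only [map_pow, map_mul, FreeGroup.lift_apply_of, sq, Equiv.Perm.mul_apply,
          Equiv.Perm.one_apply]
        rw [hTrip a b c h, hTrip a b c h]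
        exact involC _ W
    set φ : ReflGroup S L →* Equiv.Perm (Quotient sE) := PresentedGroup.toGroup hrels with hφ
    have hφt : ∀ a, φ (tgen S L a) = f a := fun a => PresentedGroup.toGroup.of hrels
    have hker : Subgroup.normalClosure (B0Gens S L) ≤ φ.ker := by
      refine Subgroup.normalClosure_le_normal ?_
      rintro g ⟨a, b, c, a', c', h1, h2, rfl⟩
      have : φ (tgen S L a * tgen S L b * tgen S L c * tgen S L a' * tgen S L b * tgen S L c')
          = 1 := by
        simp only [map_mul, hφt]
        refine Equiv.ext fun W => ?_
        simp only [Equiv.Perm.mul_apply, Equiv.Perm.one_apply]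
        rw [hTrip a' b c' h2, hTrip a b c h1]
        exact involC _ W
      exact this
    have h1 : φ (tgen S L x₀ * tgen S L y₀) = 1 := hker hmem
    rw [map_mul, hφt, hφt] at h1
    have hfe : ∀ W, f x₀ (f y₀ W) = W := by
      intro W
      have := Equiv.ext_iff.mp h1 W
      simpa [Equiv.Perm.mul_apply] using this
    obtain ⟨z, hz⟩ := htotal x₀ x₀
    obtain ⟨z', hz'⟩ := htotal y₀ x₀
    have e1 : f y₀ (qk x₀) = qk z' := by rw [hfa]; exact compL y₀ x₀ z' hz'
    have e2 : f x₀ (qk x₀) = qk z := by rw [hfa]; exact compL x₀ x₀ z hz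
    have e3 : f x₀ (qk z') = qk x₀ := by rw [← e1]; exact hfe (qk x₀)
    have e4 : f x₀ (qk x₀) = qk z' := by
      have := involC (qk x₀) (qk z')
      rw [← hfa x₀, ← hfa x₀, e3] at this
      exact this
    have e5 : qk z = qk z' := e2.symm.trans e4
    have hrz : r z z' := Quotient.exact e5
    obtain ⟨i, hi⟩ := hrz
    exact ⟨i + 1, Relation.TransGen.single (Or.inr ⟨x₀, z, x₀, z', approxR_refl i x₀, hi,
      hsym₂ _ _ _ hz, hsym₂ _ _ _ (hsym₁ _ _ _ hz')⟩)⟩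
  · -- reverse direction
    rintro ⟨i, hxy⟩
    set N := Subgroup.normalClosure (B0Gens S L) with hN
    letI : N.Normal := Subgroup.normalClosure_normal
    set π : ReflGroup S L →* (ReflGroup S L ⧸ N) := QuotientGroup.mk' N with hπ
    set τ : S → (ReflGroup S L ⧸ N) := fun u => π (tgen S L u) with hτ
    have hsq : ∀ u, τ u * τ u = 1 := by
      intro u
      have h0 : tgen S L u * tgen S L u = 1 := by
        have h1 : (QuotientGroup.mk (FreeGroup.of u ^ 2) : ReflGroup S L) = 1 :=
          (QuotientGroup.eq_one_iff _).mpr (Subgroup.subset_normalClosure (Or.inl ⟨u, rfl⟩))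
        calc tgen S L u * tgen S L u
            = (show ReflGroup S L from QuotientGroup.mk (FreeGroup.of u ^ 2)) := by rw [sq]; rfl
          _ = 1 := h1
      rw [hτ]; dsimp only; rw [← map_mul, h0, map_one]
    have htripG : ∀ a b c, L a b c → (τ a * τ b * τ c) * (τ a * τ b * τ c) = 1 := by
      intro a b c h
      have h0 : (tgen S L a * tgen S L b * tgen S L c) *
          (tgen S L a * tgen S L b * tgen S L c) = 1 := by
        have h1 : (QuotientGroup.mk ((FreeGroup.of a * FreeGroup.of b * FreeGroup.of c) ^ 2) :
            ReflGroup S L) = 1 :=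
          (QuotientGroup.eq_one_iff _).mpr
            (Subgroup.subset_normalClosure (Or.inr ⟨a, b, c, h, rfl⟩))
        calc (tgen S L a * tgen S L b * tgen S L c) * (tgen S L a * tgen S L b * tgen S L c)
            = (show ReflGroup S L from
              QuotientGroup.mk ((FreeGroup.of a * FreeGroup.of b * FreeGroup.of c) ^ 2)) := by rw [sq]; rfl
          _ = 1 := h1
      have := congrArg π h0
      simpa [hτ, map_mul, mul_assoc] using this
    have hW : ∀ a b c a' c', L a b c → L a' b c' →
        τ a * τ b * τ c = τ a' * τ b * τ c' := by
      intro a b c a' c' h1 h2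
      have hg : tgen S L a * tgen S L b * tgen S L c * tgen S L a' * tgen S L b * tgen S L c'
          ∈ N := Subgroup.subset_normalClosure ⟨a, b, c, a', c', h1, h2, rfl⟩
      have h3 : (τ a * τ b * τ c) * (τ a' * τ b * τ c') = 1 := by
        have h5 : π (tgen S L a * tgen S L b * tgen S L c * tgen S L a' * tgen S L b *
            tgen S L c') = 1 := (QuotientGroup.eq_one_iff _).mpr hg
        simpa [hτ, map_mul, mul_assoc] using h5
      have h6 : (τ a' * τ b * τ c')⁻¹ = τ a' * τ b * τ c' :=
        inv_eq_of_mul_eq_one_left (htripG a' b c' h2)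
      rw [← h6]
      exact eq_inv_of_mul_eq_one_left h3
    have M : ∀ (i : ℕ) (u u' : S), approxR L i u u' →
        τ u = τ u' ∧ ∀ a c a' c', L a u c → L a' u' c' →
          τ a * τ u * τ c = τ a' * τ u' * τ c' := by
      intro i
      induction i with
      | zero =>
        rintro u u' rfl
        exact ⟨rfl, fun a c a' c' h h' => hW a u c a' c' h h'⟩
      | succ i ih =>
        have step : ∀ u u', (u = u' ∨ ∃ p q p' q' : S,
            approxR L i p p' ∧ approxR L i q q' ∧ L p q u ∧ L p' q' u') →
            τ u = τ u' ∧ ∀ a c a' c', L a u c → L a' u' c' →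
              τ a * τ u * τ c = τ a' * τ u' * τ c' := by
          rintro u u' (rfl | ⟨p, q, p', q', hp, hq, h1, h2⟩)
          · exact ⟨rfl, fun a c a' c' h h' => hW a u c a' c' h h'⟩
          · obtain ⟨hpe, _⟩ := ih p p' hp
            obtain ⟨hqe, hqs⟩ := ih q q' hq
            have key := hqs p u p' u' h1 h2
            rw [hpe, hqe] at key
            rw [mul_assoc, mul_assoc] at key
            have hue : τ u = τ u' := mul_left_cancel (mul_left_cancel key)
            refine ⟨hue, ?_⟩
            intro a c a' c' ha ha'
            have e1 := hW a u c p q ha (hsym₂ _ _ _ h1)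
            have e2 := hW a' u' c' p' q' ha' (hsym₂ _ _ _ h2)
            rw [e1, e2, hpe, hqe, hue]
        intro u u' h
        induction h with
        | single h => exact step _ _ h
        | @tail b c h₁ h₂ ih2 =>
          obtain ⟨e1, s1⟩ := ih2
          obtain ⟨e2, s2⟩ := step _ _ h₂
          refine ⟨e1.trans e2, ?_⟩
          intro a cc a' cc' ha ha'
          obtain ⟨d, hd⟩ := htotal b b
          exact (s1 a cc b d ha hd).trans (s2 b d a' cc' hd ha')
    have hxy' : τ x₀ = τ y₀ := (M i x₀ y₀ hxy).1
    have hone : π (tgen S L x₀ * tgen S L y₀) = 1 := by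
      rw [map_mul]
      have : π (tgen S L x₀) = τ x₀ := rfl
      rw [this, show π (tgen S L y₀) = τ y₀ from rfl, hxy', hsq]
    exact (QuotientGroup.eq_one_iff _).mp hone
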